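/- arXiv:0911.2892 — 2 statements merged into one kernel-verified Lean document; each statement's English description precedes it below -/
import Mathlib

section
/- Let f : [0,1] → ℝ be continuous, ε > 0, and let τ be a tagged partition of [0,1] whose mesh is at most ε. Then the Riemann sum I(f, τ) satisfies |I(f, τ) - ∫₀¹ f| ≤ ∫₀¹ ω(f, ε), where ω(f,ε)(x) = sup { |f(t) - f(s)| : t, s ∈ [x-ε, x+ε] ∩ [0,1] }. -/
-- assume aux defs inline for test
noncomputable def osc (f : ℝ → ℝ) (ε : ℝ) (x : ℝ) : ℝ :=
  sSup {d : ℝ | ∃ t ∈ Set.Icc (x - ε) (x + ε) ∩ Set.Icc (0:ℝ) 1,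
                ∃ s ∈ Set.Icc (x - ε) (x + ε) ∩ Set.Icc (0:ℝ) 1,
                d = |f t - f s|}

def oscSet (f : ℝ → ℝ) (ε : ℝ) (x : ℝ) : Set ℝ :=
  {d : ℝ | ∃ t ∈ Set.Icc (x - ε) (x + ε) ∩ Set.Icc (0:ℝ) 1,
                ∃ s ∈ Set.Icc (x - ε) (x + ε) ∩ Set.Icc (0:ℝ) 1,
                d = |f t - f s|}

lemma osc_eq (f : ℝ → ℝ) (ε x : ℝ) : osc f ε x = sSup (oscSet f ε x) := rfl

lemma bddAbove_oscSet {f : ℝ → ℝ} {C : ℝ} (hC : ∀ u ∈ Set.Icc (0:ℝ) 1, |f u| ≤ C)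
    (ε x : ℝ) : BddAbove (oscSet f ε x) := by
  refine ⟨2*C, fun d hd => ?_⟩
  obtain ⟨t, ht, s, hs, rfl⟩ := hd
  have h1 := hC t ht.2
  have h2 := hC s hs.2
  calc |f t - f s| ≤ |f t| + |f s| := abs_sub _ _
    _ ≤ 2*C := by linarith

lemma oscSet_nonempty {f : ℝ → ℝ} {ε x : ℝ} (hε : 0 < ε) (hx : x ∈ Set.Icc (0:ℝ) 1) :
    (oscSet f ε x).Nonempty := by
  refine ⟨0, x, ⟨⟨by linarith, by linarith⟩, hx⟩, x, ⟨⟨by linarith, by linarith⟩, hx⟩, by simp⟩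

lemma abs_min_sub_min_le_abs (a b c : ℝ) : |min a c - min b c| ≤ |a - b| := by
  rcases le_total a c with h1 | h1 <;> rcases le_total b c with h2 | h2 <;>
    simp only [min_eq_left, min_eq_right, *] <;> cases' abs_cases (a - b) with h h <;>
    cases' abs_cases (a - c) with h' h' <;> cases' abs_cases (c - b) with h'' h'' <;>
    simp [abs_le] <;> constructor <;> linarith

/-- clamp of u to [max (y-ε) 0, min (y+ε) 1] -/
noncomputable def clampTo (ε y u : ℝ) : ℝ := max (max (y-ε) 0) (min u (min (y+ε) 1))

lemma clampTo_mem {ε y : ℝ} (hε : 0 < ε) (hy : y ∈ Set.Icc (0:ℝ) 1) (u : ℝ) :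
    clampTo ε y u ∈ Set.Icc (y - ε) (y + ε) ∩ Set.Icc (0:ℝ) 1 := by
  obtain ⟨hy0, hy1⟩ := hy
  have hab : max (y-ε) 0 ≤ min (y+ε) 1 := by
    simp only [max_le_iff, le_min_iff]; constructor <;> constructor <;> linarith
  have h1 : max (y-ε) 0 ≤ clampTo ε y u := le_max_left _ _
  have h2 : clampTo ε y u ≤ min (y+ε) 1 := max_le hab (min_le_right _ _)
  refine ⟨⟨le_trans (le_max_left _ _) h1, le_trans h2 (min_le_left _ _)⟩,
    ⟨le_trans (le_max_right _ _) h1, le_trans h2 (min_le_right _ _)⟩⟩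

lemma clampTo_dist {ε x y u : ℝ} (hε : 0 < ε) (hy : y ∈ Set.Icc (0:ℝ) 1)
    (hu : u ∈ Set.Icc (x - ε) (x + ε) ∩ Set.Icc (0:ℝ) 1) :
    |u - clampTo ε y u| ≤ |x - y| := by
  obtain ⟨⟨hu1, hu2⟩, ⟨hu3, hu4⟩⟩ := hu
  have ha : max (x-ε) 0 ≤ u := max_le hu1 hu3
  have hb : u ≤ min (x+ε) 1 := le_min hu2 hu4
  have haa : |max (y-ε) 0 - max (x-ε) 0| ≤ |x - y| := by
    have := abs_max_sub_max_le_abs (y-ε) (x-ε) 0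
    rw [abs_sub_comm (x:ℝ) y]
    calc |max (y-ε) 0 - max (x-ε) 0| ≤ |(y-ε) - (x-ε)| := this
      _ = |y - x| := by ring_nf
  have hbb : |min (x+ε) 1 - min (y+ε) 1| ≤ |x - y| := by
    have := abs_min_sub_min_le_abs (x+ε) (y+ε) 1
    calc |min (x+ε) 1 - min (y+ε) 1| ≤ |(x+ε) - (y+ε)| := this
      _ = |x - y| := by ring_nf
  have hab : max (y-ε) 0 ≤ min (y+ε) 1 := by
    obtain ⟨hy0, hy1⟩ := hy
    simp only [max_le_iff, le_min_iff]; constructor <;> constructor <;> linarith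
  unfold clampTo
  rcases lt_or_ge u (max (y-ε) 0) with h | h
  · rw [min_eq_left (le_trans h.le hab), max_eq_left h.le]
    rw [abs_sub_comm, abs_of_nonneg (by linarith)]
    cases' abs_cases (max (y-ε) 0 - max (x-ε) 0) with h' h' <;>
      cases' abs_cases (x - y) with h'' h'' <;> linarith [haa]
  · rcases le_or_gt u (min (y+ε) 1) with h2 | h2
    · rw [min_eq_left h2, max_eq_right h]
      simp
    · rw [min_eq_right h2.le, max_eq_right hab]
      rw [abs_of_nonneg (by linarith)]
      cases' abs_cases (min (x+ε) 1 - min (y+ε) 1) with h' h' <;>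
        cases' abs_cases (x - y) with h'' h'' <;> linarith [hbb]

lemma osc_le_osc_add {f : ℝ → ℝ} {C : ℝ} (hC : ∀ u ∈ Set.Icc (0:ℝ) 1, |f u| ≤ C)
    {ε x y δ η : ℝ} (hε : 0 < ε) (hx : x ∈ Set.Icc (0:ℝ) 1) (hy : y ∈ Set.Icc (0:ℝ) 1)
    (hδ : ∀ s ∈ Set.Icc (0:ℝ) 1, ∀ t ∈ Set.Icc (0:ℝ) 1, |s - t| < δ → |f s - f t| ≤ η)
    (hxy : |x - y| < δ) :
    osc f ε x ≤ osc f ε y + 2 * η := by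
  rw [osc_eq]
  apply csSup_le (oscSet_nonempty hε hx)
  rintro d ⟨t, ht, s, hs, rfl⟩
  set t' := clampTo ε y t with ht'def
  set s' := clampTo ε y s with hs'def
  have ht' := clampTo_mem hε hy t
  have hs' := clampTo_mem hε hy s
  have hdt : |t - t'| < δ := lt_of_le_of_lt (clampTo_dist hε hy ht) hxy
  have hds : |s - s'| < δ := lt_of_le_of_lt (clampTo_dist hε hy hs) hxy
  have h1 : |f t - f t'| ≤ η := hδ t ht.2 t' ht'.2 hdt
  have h2 : |f s - f s'| ≤ η := hδ s hs.2 s' hs'.2 hds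
  have hmem : |f t' - f s'| ∈ oscSet f ε y := ⟨t', ht', s', hs', rfl⟩
  have h3 : |f t' - f s'| ≤ osc f ε y := le_csSup (bddAbove_oscSet hC ε y) hmem
  calc |f t - f s| = |(f t - f t') + (f t' - f s') + (f s' - f s)| := by ring_nf
    _ ≤ |f t - f t'| + |f t' - f s'| + |f s' - f s| := by
        exact (abs_add_three _ _ _)
    _ ≤ η + osc f ε y + η := by
        rw [abs_sub_comm (f s') (f s)] at *; linarith
    _ = osc f ε y + 2 * η := by ring

lemma osc_continuousOn {f : ℝ → ℝ} (hf : ContinuousOn f (Set.Icc (0:ℝ) 1)) {ε : ℝ}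
    (hε : 0 < ε) : ContinuousOn (osc f ε) (Set.Icc (0:ℝ) 1) := by
  obtain ⟨C, hC⟩ := isCompact_Icc.exists_bound_of_continuousOn hf
  simp only [Real.norm_eq_abs] at hC
  have huc := isCompact_Icc.uniformContinuousOn_of_continuous hf
  rw [Metric.uniformContinuousOn_iff] at huc
  intro x hx
  rw [Metric.continuousWithinAt_iff]
  intro η hη
  obtain ⟨δ, hδ0, hδ⟩ := huc (η/4) (by linarith)
  have hδ' : ∀ s ∈ Set.Icc (0:ℝ) 1, ∀ t ∈ Set.Icc (0:ℝ) 1, |s - t| < δ → |f s - f t| ≤ η/4 := by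
    intro s hs t ht h
    rcases eq_or_ne s t with rfl | hne
    · simp; linarith
    · exact (hδ s hs t ht (by rwa [Real.dist_eq])).le
  refine ⟨δ, hδ0, fun y hy hyx => ?_⟩
  rw [Real.dist_eq] at hyx ⊢
  have h1 := osc_le_osc_add hC hε hy hx hδ' hyx
  have h2 := osc_le_osc_add hC hε hx hy hδ' (by rwa [abs_sub_comm])
  cases' abs_cases (osc f ε y - osc f ε x) with h h <;> linarith

/-- A tagged partition of `[0,1]`. -/
structure TaggedPartition where
  n : ℕ
  x : ℕ → ℝ
  t : ℕ → ℝ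
  n_pos : 0 < n
  x_zero : x 0 = 0
  x_last : x n = 1
  x_mono : ∀ k < n, x k < x (k+1)
  t_mem : ∀ k < n, t k ∈ Set.Icc (x k) (x (k+1))

/-- The mesh of the tagged partition is at most `δ`. -/
def TaggedPartition.meshLE (τ : TaggedPartition) (δ : ℝ) : Prop :=
  ∀ k < τ.n, τ.x (k+1) - τ.x k ≤ δ

/-- The Riemann sum of `f` over a tagged partition of `[0,1]`. -/
def riemannSum (f : ℝ → ℝ) (τ : TaggedPartition) : ℝ :=
  ∑ k ∈ Finset.range τ.n, f (τ.t k) * (τ.x (k+1) - τ.x k)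

/-- Riemann integrability on `[0,1]`: Riemann sums converge as the mesh tends to 0. -/
def RiemannIntegrableOn01 (f : ℝ → ℝ) : Prop :=
  ∃ A : ℝ, ∀ ε > 0, ∃ δ > 0, ∀ τ : TaggedPartition,
    τ.meshLE δ → |riemannSum f τ - A| < ε

theorem stmt_4 (f : ℝ → ℝ) (hf : ContinuousOn f (Set.Icc (0:ℝ) 1))
    (ε : ℝ) (hε : 0 < ε) (τ : TaggedPartition) (hτ : τ.meshLE ε) :
    |riemannSum f τ - ∫ x in (0:ℝ)..1, f x| ≤ ∫ x in (0:ℝ)..1, osc f ε x := by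
  obtain ⟨C, hC⟩ := isCompact_Icc.exists_bound_of_continuousOn hf
  simp only [Real.norm_eq_abs] at hC
  -- monotonicity of partition points
  have hmono : ∀ i j : ℕ, i ≤ j → j ≤ τ.n → τ.x i ≤ τ.x j := by
    intro i j hij hjn
    induction j with
    | zero => rw [Nat.le_zero.mp hij]
    | succ j ih =>
      rcases Nat.lt_or_ge i (j+1) with h | h
      · have : τ.x i ≤ τ.x j := ih (by omega) (by omega)
        exact this.trans (τ.x_mono j (by omega)).le
      · have : i = j + 1 := by omega
        simp [this]
  have hx01 : ∀ k ≤ τ.n, τ.x k ∈ Set.Icc (0:ℝ) 1 := by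
    intro k hk
    constructor
    · rw [← τ.x_zero]; exact hmono 0 k (Nat.zero_le _) hk
    · rw [← τ.x_last]; exact hmono k τ.n hk le_rfl
  have hsub : ∀ k < τ.n, Set.Icc (τ.x k) (τ.x (k+1)) ⊆ Set.Icc (0:ℝ) 1 := by
    intro k hk
    exact Set.Icc_subset_Icc (hx01 k hk.le).1 (hx01 (k+1) hk).2
  have hle : ∀ k < τ.n, τ.x k ≤ τ.x (k+1) := fun k hk => (τ.x_mono k hk).le
  have huIcc : ∀ k < τ.n, Set.uIcc (τ.x k) (τ.x (k+1)) = Set.Icc (τ.x k) (τ.x (k+1)) :=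
    fun k hk => Set.uIcc_of_le (hle k hk)
  have hoscC := osc_continuousOn hf hε
  have hintf : ∀ k < τ.n, IntervalIntegrable f MeasureTheory.volume (τ.x k) (τ.x (k+1)) := by
    intro k hk
    apply ContinuousOn.intervalIntegrable
    rw [huIcc k hk]
    exact hf.mono (hsub k hk)
  have hintosc : ∀ k < τ.n,
      IntervalIntegrable (osc f ε) MeasureTheory.volume (τ.x k) (τ.x (k+1)) := by
    intro k hk
    apply ContinuousOn.intervalIntegrable
    rw [huIcc k hk]
    exact hoscC.mono (hsub k hk)
  have hIf : (∫ x in (0:ℝ)..1, f x) = ∑ k ∈ Finset.range τ.n,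
      ∫ x in (τ.x k)..(τ.x (k+1)), f x := by
    rw [intervalIntegral.sum_integral_adjacent_intervals hintf, τ.x_zero, τ.x_last]
  have hIosc : (∫ x in (0:ℝ)..1, osc f ε x) = ∑ k ∈ Finset.range τ.n,
      ∫ x in (τ.x k)..(τ.x (k+1)), osc f ε x := by
    rw [intervalIntegral.sum_integral_adjacent_intervals hintosc, τ.x_zero, τ.x_last]
  have hRS : riemannSum f τ = ∑ k ∈ Finset.range τ.n,
      ∫ x in (τ.x k)..(τ.x (k+1)), f (τ.t k) := by
    unfold riemannSum
    apply Finset.sum_congr rfl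
    intro k hk
    rw [intervalIntegral.integral_const, smul_eq_mul, mul_comm]
  rw [hRS, hIf, hIosc, ← Finset.sum_sub_distrib]
  calc |∑ k ∈ Finset.range τ.n, ((∫ x in (τ.x k)..(τ.x (k+1)), f (τ.t k)) -
          ∫ x in (τ.x k)..(τ.x (k+1)), f x)|
      ≤ ∑ k ∈ Finset.range τ.n, |(∫ x in (τ.x k)..(τ.x (k+1)), f (τ.t k)) -
          ∫ x in (τ.x k)..(τ.x (k+1)), f x| := Finset.abs_sum_le_sum_abs _ _
    _ ≤ ∑ k ∈ Finset.range τ.n, ∫ x in (τ.x k)..(τ.x (k+1)), osc f ε x := by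
        apply Finset.sum_le_sum
        intro k hk
        rw [Finset.mem_range] at hk
        have hintc : IntervalIntegrable (fun _ => f (τ.t k)) MeasureTheory.volume
            (τ.x k) (τ.x (k+1)) := intervalIntegrable_const
        rw [← intervalIntegral.integral_sub hintc (hintf k hk)]
        have habs : IntervalIntegrable (fun x => |f (τ.t k) - f x|) MeasureTheory.volume
            (τ.x k) (τ.x (k+1)) := by
          apply ContinuousOn.intervalIntegrable
          rw [huIcc k hk]
          exact (continuousOn_const.sub (hf.mono (hsub k hk))).abs
        calc |∫ x in (τ.x k)..(τ.x (k+1)), (f (τ.t k) - f x)|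
            ≤ ∫ x in (τ.x k)..(τ.x (k+1)), |f (τ.t k) - f x| :=
              intervalIntegral.abs_integral_le_integral_abs (hle k hk)
          _ ≤ ∫ x in (τ.x k)..(τ.x (k+1)), osc f ε x := by
              apply intervalIntegral.integral_mono_on (hle k hk) habs (hintosc k hk)
              intro u hu
              have hu01 : u ∈ Set.Icc (0:ℝ) 1 := hsub k hk hu
              have htk := τ.t_mem k hk
              have htk01 : τ.t k ∈ Set.Icc (0:ℝ) 1 := hsub k hk htk
              have hmesh := hτ k hk
              have htkmem : τ.t k ∈ Set.Icc (u - ε) (u + ε) ∩ Set.Icc (0:ℝ) 1 := by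
                refine ⟨⟨?_, ?_⟩, htk01⟩
                · have : u ≤ τ.x (k+1) := hu.2
                  have : τ.x k ≤ τ.t k := htk.1
                  linarith [hu.2, htk.1]
                · linarith [hu.1, htk.2]
              have humem : u ∈ Set.Icc (u - ε) (u + ε) ∩ Set.Icc (0:ℝ) 1 :=
                ⟨⟨by linarith, by linarith⟩, hu01⟩
              have : |f (τ.t k) - f u| ∈ oscSet f ε u := ⟨_, htkmem, _, humem, rfl⟩
              exact le_csSup (bddAbove_oscSet hC ε u) this
end

section
/- Suppose f : [0,1] → ℝ is Darboux integrable in the sense that for every ε > 0 there exist piecewise linear functions f⁻, f⁺ on [0,1] with f⁻(x) ≤ f(x) ≤ f⁺(x) for all x ∈ [0,1] and ∫₀¹ (f⁺ - f⁻) < ε. Then for every ε > 0 there exist δ > 0 and a nonnegative piecewise linear function g with ∫₀¹ g < 1/2 such that for all x, y ∈ [0,1] with max(g(x), g(y)) < 1 and |x - y| < δ, one has |f(x) - f(y)| < ε. -/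
/-- A polygonal (piecewise linear) function on `[0,1]` with rational breakpoints
and rational nodal values. -/
def IsPolygonal (f : ℝ → ℝ) : Prop :=
  ∃ (m : ℕ) (p q : ℕ → ℚ), 0 < m ∧ p 0 = 0 ∧ p m = 1 ∧
    (∀ k < m, p k < p (k+1)) ∧
    ∀ k < m, ∀ x ∈ Set.Icc ((p k : ℝ)) ((p (k+1) : ℝ)),
      f x = ((q (k+1) : ℝ) * (x - (p k : ℝ)) + (q k : ℝ) * ((p (k+1) : ℝ) - x))
              / ((p (k+1) : ℝ) - (p k : ℝ))


/-- monotonicity from strict increase on steps -/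
lemma pmono (p : ℕ → ℚ) (m : ℕ) (hinc : ∀ k < m, p k < p (k+1)) :
    ∀ i j, i ≤ j → j ≤ m → p i ≤ p j := by
  intro i j hij hjm
  induction j with
  | zero => simp_all
  | succ n ih =>
    rcases Nat.eq_or_lt_of_le hij with rfl | h
    · exact le_rfl
    · exact (ih (Nat.lt_succ_iff.mp h) (Nat.le_of_succ_le hjm)).trans
        (hinc n (Nat.lt_of_succ_le hjm)).le

/-- affine restriction -/
lemma affine_sub {p P a b : ℝ} {q Q : ℝ} (F : ℝ → ℝ) (hpP : p < P) (hab : a < b)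
    (hF : ∀ x ∈ Set.Icc p P, F x = (Q * (x - p) + q * (P - x)) / (P - p))
    (ha : a ∈ Set.Icc p P) (hb : b ∈ Set.Icc p P) :
    ∀ x ∈ Set.Icc a b, F x = (F b * (x - a) + F a * (b - x)) / (b - a) := by
  intro x hx
  have hx' : x ∈ Set.Icc p P := ⟨ha.1.trans hx.1, hx.2.trans hb.2⟩
  rw [hF x hx', hF a ha, hF b hb]
  have h1 : P - p ≠ 0 := sub_ne_zero.mpr hpP.ne'
  have h2 : b - a ≠ 0 := sub_ne_zero.mpr hab.ne'
  field_simp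
  ring

/-- find a piece containing a real point -/
lemma find_piece (p : ℕ → ℚ) (m : ℕ) (hm : 0 < m) (h0 : p 0 = 0) (h1 : p m = 1)
    (hinc : ∀ k < m, p k < p (k+1)) (x : ℝ) (hx : x ∈ Set.Icc (0:ℝ) 1) :
    ∃ k < m, x ∈ Set.Icc ((p k : ℝ)) ((p (k+1) : ℝ)) := by
  classical
  rcases eq_or_lt_of_le hx.2 with heq | hlt
  · refine ⟨m - 1, Nat.sub_lt hm one_pos, ?_, ?_⟩
    · have : p (m-1) ≤ 1 := h1 ▸ pmono p m hinc (m-1) m (Nat.sub_le m 1) le_rfl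
      calc ((p (m-1) : ℝ)) ≤ 1 := by exact_mod_cast this
        _ = x := heq.symm
    · have : m - 1 + 1 = m := Nat.succ_pred_eq_of_pos hm
      rw [this, h1, heq]; norm_num
  · set k := Nat.findGreatest (fun j => (p j : ℝ) ≤ x) m with hk
    have hP0 : ((p 0 : ℝ)) ≤ x := by rw [h0]; exact_mod_cast hx.1
    have hspec : ((p k : ℝ)) ≤ x :=
      Nat.findGreatest_spec (P := fun j => (p j : ℝ) ≤ x) (Nat.zero_le m) hP0
    have hkm : k ≤ m := Nat.findGreatest_le m
    have hklt : k < m := by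
      rcases Nat.lt_or_ge k m with h | h
      · exact h
      · exfalso
        have : k = m := le_antisymm hkm h
        rw [this, h1] at hspec
        push_cast at hspec
        linarith
    have hnot : ¬ ((p (k+1) : ℝ)) ≤ x :=
      Nat.findGreatest_is_greatest (Nat.lt_succ_self k) (Nat.succ_le_of_lt hklt)
    exact ⟨k, hklt, hspec, (not_le.mp hnot).le⟩

/-- find a piece containing [a,b] when no breakpoint separates a from b -/
lemma find_piece_gap (p : ℕ → ℚ) (m : ℕ) (hm : 0 < m) (h0 : p 0 = 0) (h1 : p m = 1)
    (hinc : ∀ k < m, p k < p (k+1)) (a b : ℚ) (ha : 0 ≤ a) (hab : a < b) (hb : b ≤ 1)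
    (hgap : ∀ j ≤ m, a < p j → b ≤ p j) :
    ∃ k < m, p k ≤ a ∧ b ≤ p (k+1) := by
  classical
  set k := Nat.findGreatest (fun j => p j ≤ a) m with hk
  have hspec : p k ≤ a :=
    Nat.findGreatest_spec (P := fun j => p j ≤ a) (Nat.zero_le m) (by simpa [h0] using ha)
  have hkm : k ≤ m := Nat.findGreatest_le m
  have hklt : k < m := by
    rcases Nat.lt_or_ge k m with h | h
    · exact h
    · exfalso
      have : k = m := le_antisymm hkm h
      rw [this, h1] at hspec
      linarith
  have hnot : ¬ p (k+1) ≤ a :=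
    Nat.findGreatest_is_greatest (Nat.lt_succ_self k) (Nat.succ_le_of_lt hklt)
  exact ⟨k, hklt, hspec, hgap (k+1) (Nat.succ_le_of_lt hklt) (not_le.mp hnot)⟩

/-- rational values at rational points -/
lemma rat_value {f : ℝ → ℝ} (h : IsPolygonal f) (r : ℚ) (hr0 : 0 ≤ r) (hr1 : r ≤ 1) :
    ∃ s : ℚ, f (r : ℝ) = (s : ℝ) := by
  obtain ⟨m, p, q, hm, h0, h1, hinc, hfor⟩ := h
  obtain ⟨k, hk, hxk⟩ := find_piece p m hm h0 h1 hinc (r : ℝ)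
    ⟨by exact_mod_cast hr0, by exact_mod_cast hr1⟩
  refine ⟨(q (k+1) * (r - p k) + q k * (p (k+1) - r)) / (p (k+1) - p k), ?_⟩
  rw [hfor k hk (r:ℝ) hxk]
  push_cast
  ring_nf

lemma poly_continuousOn {f : ℝ → ℝ} (h : IsPolygonal f) :
    ContinuousOn f (Set.Icc (0:ℝ) 1) := by
  obtain ⟨m, p, q, hm, h0, h1, hinc, hfor⟩ := h
  have hcover : Set.Icc (0:ℝ) 1 = ⋃ k : Fin m, Set.Icc ((p k : ℝ)) ((p (k+1) : ℝ)) := by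
    ext x
    constructor
    · intro hx
      obtain ⟨k, hk, hxk⟩ := find_piece p m hm h0 h1 hinc x hx
      exact Set.mem_iUnion.2 ⟨⟨k, hk⟩, hxk⟩
    · intro hx
      obtain ⟨k, hk⟩ := Set.mem_iUnion.1 hx
      have hl : (0:ℚ) ≤ p k := h0 ▸ pmono p m hinc 0 k (Nat.zero_le _) k.2.le
      have hr : p (k+1) ≤ 1 := h1 ▸ pmono p m hinc (k+1) m k.2 le_rfl
      constructor
      · calc (0:ℝ) ≤ (p k : ℝ) := by exact_mod_cast hl
          _ ≤ x := hk.1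
      · calc x ≤ ((p (k+1) : ℝ)) := hk.2
          _ ≤ 1 := by exact_mod_cast hr
  rw [hcover]
  apply LocallyFinite.continuousOn_iUnion
  · exact locallyFinite_of_finite _
  · intro i; exact isClosed_Icc
  · intro k
    have hcont : ContinuousOn
        (fun x => ((q (k+1) : ℝ) * (x - (p k : ℝ)) + (q k : ℝ) * ((p (k+1) : ℝ) - x))
              / ((p (k+1) : ℝ) - (p k : ℝ))) (Set.Icc ((p k : ℝ)) ((p (k+1) : ℝ))) :=
      (Continuous.div_const (((continuous_const.mul (continuous_id.sub continuous_const)).add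
        (continuous_const.mul (continuous_const.sub continuous_id)))) _).continuousOn
    exact hcont.congr (fun x hx => hfor k k.2 x hx)

lemma poly_unif {f : ℝ → ℝ} (h : IsPolygonal f) {ε : ℝ} (hε : 0 < ε) :
    ∃ δ > (0:ℝ), ∀ x ∈ Set.Icc (0:ℝ) 1, ∀ y ∈ Set.Icc (0:ℝ) 1,
      |x - y| < δ → |f x - f y| < ε := by
  have huc : UniformContinuousOn f (Set.Icc (0:ℝ) 1) :=
    isCompact_Icc.uniformContinuousOn_of_continuous (poly_continuousOn h)
  obtain ⟨δ, hδ, hd⟩ := Metric.uniformContinuousOn_iff.1 huc ε hε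
  refine ⟨δ, hδ, fun x hx y hy hxy => ?_⟩
  have := hd x hx y hy (by rwa [Real.dist_eq])
  rwa [Real.dist_eq] at this

lemma isPolygonal_comb (c : ℚ) (f1 f2 : ℝ → ℝ) (h1 : IsPolygonal f1) (h2 : IsPolygonal f2) :
    IsPolygonal (fun x => (c : ℝ) * (f2 x - f1 x)) := by
  classical
  have h1' := h1
  have h2' := h2
  obtain ⟨m1, p1, q1, hm1, h01, h11, hinc1, hfor1⟩ := h1
  obtain ⟨m2, p2, q2, hm2, h02, h12, hinc2, hfor2⟩ := h2
  set g : ℝ → ℝ := fun x => (c : ℝ) * (f2 x - f1 x) with hg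
  set S : Finset ℚ := (Finset.range (m1+1)).image p1 ∪ (Finset.range (m2+1)).image p2 with hS
  have hp1S : ∀ j ≤ m1, p1 j ∈ S := fun j hj =>
    Finset.mem_union_left _ (Finset.mem_image.2 ⟨j, Finset.mem_range.2 (Nat.lt_succ_of_le hj), rfl⟩)
  have hp2S : ∀ j ≤ m2, p2 j ∈ S := fun j hj =>
    Finset.mem_union_right _ (Finset.mem_image.2 ⟨j, Finset.mem_range.2 (Nat.lt_succ_of_le hj), rfl⟩)
  have h0S : (0:ℚ) ∈ S := h01 ▸ hp1S 0 (Nat.zero_le _)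
  have h1S : (1:ℚ) ∈ S := h11 ▸ hp1S m1 le_rfl
  have hSmem : ∀ s ∈ S, 0 ≤ s ∧ s ≤ 1 := by
    intro s hs
    rcases Finset.mem_union.1 hs with h | h
    · obtain ⟨j, hj, rfl⟩ := Finset.mem_image.1 h
      have hj' := Nat.lt_succ_iff.1 (Finset.mem_range.1 hj)
      exact ⟨h01 ▸ pmono p1 m1 hinc1 0 j (Nat.zero_le _) hj',
        h11 ▸ pmono p1 m1 hinc1 j m1 hj' le_rfl⟩
    · obtain ⟨j, hj, rfl⟩ := Finset.mem_image.1 h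
      have hj' := Nat.lt_succ_iff.1 (Finset.mem_range.1 hj)
      exact ⟨h02 ▸ pmono p2 m2 hinc2 0 j (Nat.zero_le _) hj',
        h12 ▸ pmono p2 m2 hinc2 j m2 hj' le_rfl⟩
  set L : List ℚ := S.sort (· ≤ ·) with hLdef
  have hsortlt : L.Pairwise (· < ·) := (Finset.sortedLT_sort S).pairwise
  have hsortle : L.Pairwise (· ≤ ·) := Finset.pairwise_sort S _
  have hmemL : ∀ s, s ∈ L ↔ s ∈ S := fun s => Finset.mem_sort _
  have hlen2 : 2 ≤ L.length := by
    rw [hLdef, Finset.length_sort]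
    have hsub : ({0, 1} : Finset ℚ) ⊆ S := by
      intro s hs
      rcases Finset.mem_insert.1 hs with rfl | hs
      · exact h0S
      · rw [Finset.mem_singleton.1 hs]; exact h1S
    have : ({0, 1} : Finset ℚ).card = 2 := by decide
    rw [← this]
    exact Finset.card_le_card hsub
  set m := L.length - 1 with hmdef
  have hm : 0 < m := by omega
  have hmlt : m < L.length := by omega
  set pf : ℕ → ℚ := fun k => if h : k < L.length then L.get ⟨k, h⟩ else 1 with hpf
  have hpfget : ∀ k (h : k < L.length), pf k = L.get ⟨k, h⟩ := by
    intro k h; simp only [hpf, dif_pos h]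
  have hpfS : ∀ k, pf k ∈ S := by
    intro k
    by_cases h : k < L.length
    · rw [hpfget k h]; exact (hmemL _).1 (List.get_mem L ⟨k, h⟩)
    · simp only [hpf, dif_neg h]; exact h1S
  have hpfinc : ∀ k < m, pf k < pf (k+1) := by
    intro k hk
    rw [hpfget k (by omega), hpfget (k+1) (by omega)]
    exact hsortlt.rel_get_of_lt (by exact Nat.lt_succ_self k)
  have hlen2' : 0 < (S.sort (· ≤ ·)).length := by rw [← hLdef]; omega
  have hne : S.Nonempty := ⟨0, h0S⟩
  have hpf0 : pf 0 = 0 := by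
    rw [hpfget 0 (by omega)]
    have hmin : L.get ⟨0, by omega⟩ = S.min' hne :=
      Finset.sorted_zero_eq_min'_aux S hlen2' hne
    rw [hmin]
    exact le_antisymm (Finset.min'_le S 0 h0S) (Finset.le_min' _ _ _ fun s hs => (hSmem s hs).1)
  have hpfm : pf m = 1 := by
    rw [hpfget m hmlt]
    have hmax : L.get ⟨m, hmlt⟩ = S.max' hne :=
      Finset.sorted_last_eq_max'_aux S (by rw [← hLdef]; omega) hne
    rw [hmax]
    exact le_antisymm (Finset.max'_le _ _ _ fun s hs => (hSmem s hs).2) (Finset.le_max' S 1 h1S)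
  have hval : ∀ k, ∃ r : ℚ, g ((pf k : ℝ)) = (r : ℝ) := by
    intro k
    obtain ⟨hl, hr⟩ := hSmem _ (hpfS k)
    obtain ⟨r1, hr1⟩ := rat_value h1' (pf k) hl hr
    obtain ⟨r2, hr2⟩ := rat_value h2' (pf k) hl hr
    refine ⟨c * (r2 - r1), ?_⟩
    simp only [hg, hr1, hr2]
    push_cast
    ring
  set qf : ℕ → ℚ := fun k => (hval k).choose with hqf
  have hqspec : ∀ k, g ((pf k : ℝ)) = ((qf k : ℝ)) := fun k => (hval k).choose_spec
  have hgapS : ∀ k, k < m → ∀ s ∈ S, pf k < s → pf (k+1) ≤ s := by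
    intro k hk s hs hlt
    obtain ⟨i, hi⟩ := List.mem_iff_get.1 ((hmemL s).2 hs)
    rcases Nat.lt_or_ge i.val (k+1) with h | h
    · exfalso
      have hle : s ≤ pf k := by
        rw [← hi, hpfget k (by omega)]
        exact hsortle.rel_get_of_le (by exact Nat.lt_succ_iff.1 h)
      linarith
    · rw [← hi, hpfget (k+1) (by omega)]
      exact hsortle.rel_get_of_le (by exact h)
  refine ⟨m, pf, qf, hm, hpf0, hpfm, hpfinc, ?_⟩
  intro k hk x hx
  have hab : pf k < pf (k+1) := hpfinc k hk
  have h0a : (0:ℚ) ≤ pf k := (hSmem _ (hpfS k)).1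
  have hb1 : pf (k+1) ≤ 1 := (hSmem _ (hpfS (k+1))).2
  obtain ⟨j1, hj1, hj1l, hj1r⟩ := find_piece_gap p1 m1 hm1 h01 h11 hinc1 (pf k) (pf (k+1))
    h0a hab hb1 (fun j hj hlt => hgapS k hk (p1 j) (hp1S j hj) hlt)
  obtain ⟨j2, hj2, hj2l, hj2r⟩ := find_piece_gap p2 m2 hm2 h02 h12 hinc2 (pf k) (pf (k+1))
    h0a hab hb1 (fun j hj hlt => hgapS k hk (p2 j) (hp2S j hj) hlt)
  have habR : ((pf k : ℝ)) < ((pf (k+1) : ℝ)) := by exact_mod_cast hab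
  have haff1 := affine_sub f1 (show ((p1 j1 : ℝ)) < ((p1 (j1+1) : ℝ)) by
      exact_mod_cast hinc1 j1 hj1) habR (hfor1 j1 hj1)
    ⟨by exact_mod_cast hj1l, by exact_mod_cast hab.le.trans hj1r⟩
    ⟨by exact_mod_cast hj1l.trans hab.le, by exact_mod_cast hj1r⟩
  have haff2 := affine_sub f2 (show ((p2 j2 : ℝ)) < ((p2 (j2+1) : ℝ)) by
      exact_mod_cast hinc2 j2 hj2) habR (hfor2 j2 hj2)
    ⟨by exact_mod_cast hj2l, by exact_mod_cast hab.le.trans hj2r⟩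
    ⟨by exact_mod_cast hj2l.trans hab.le, by exact_mod_cast hj2r⟩
  have e1 := haff1 x hx
  have e2 := haff2 x hx
  show g x = _
  rw [← hqspec k, ← hqspec (k+1)]
  simp only [hg]
  rw [e1, e2]
  have hba : ((pf (k+1) : ℝ)) - ((pf k : ℝ)) ≠ 0 := sub_ne_zero.mpr habR.ne'
  field_simp
  ring

theorem stmt_13 (f : ℝ → ℝ)
    (hdarb : ∀ ε > (0:ℝ), ∃ flo fhi : ℝ → ℝ,
      IsPolygonal flo ∧ IsPolygonal fhi ∧
      (∀ x ∈ Set.Icc (0:ℝ) 1, flo x ≤ f x ∧ f x ≤ fhi x) ∧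
      (∫ x in (0:ℝ)..1, fhi x - flo x) < ε) :
    ∀ ε > (0:ℝ), ∃ δ > (0:ℝ), ∃ g : ℝ → ℝ,
      IsPolygonal g ∧
      (∀ x ∈ Set.Icc (0:ℝ) 1, 0 ≤ g x) ∧
      (∫ x in (0:ℝ)..1, g x) < 1/2 ∧
      ∀ x ∈ Set.Icc (0:ℝ) 1, ∀ y ∈ Set.Icc (0:ℝ) 1,
        max (g x) (g y) < 1 → |x - y| < δ → |f x - f y| < ε := by
  intro ε hε
  set c : ℚ := (⌈(4:ℝ)/ε⌉₊ : ℚ) + 1 with hc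
  have hc0 : (0:ℝ) < (c : ℝ) := by
    rw [hc]; push_cast; positivity
  have hcineq : 4/ε < (c : ℝ) := by
    have h1 : (4:ℝ)/ε ≤ (⌈(4:ℝ)/ε⌉₊ : ℝ) := Nat.le_ceil _
    rw [hc]; push_cast; linarith
  obtain ⟨flo, fhi, hlo, hhi, hbound, hint⟩ := hdarb (1/(4*(c:ℝ))) (by positivity)
  obtain ⟨δ₁, hδ₁, hu1⟩ := poly_unif hlo (show (0:ℝ) < ε/4 by linarith)
  obtain ⟨δ₂, hδ₂, hu2⟩ := poly_unif hhi (show (0:ℝ) < ε/4 by linarith)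
  refine ⟨min δ₁ δ₂, by positivity, fun x => (c:ℝ) * (fhi x - flo x),
    isPolygonal_comb c flo fhi hlo hhi, ?_, ?_, ?_⟩
  · intro x hx
    have := hbound x hx
    have : flo x ≤ fhi x := this.1.trans this.2
    have h2 : 0 ≤ fhi x - flo x := by linarith
    positivity
  · rw [intervalIntegral.integral_const_mul]
    have : (c:ℝ) * (∫ x in (0:ℝ)..1, fhi x - flo x) < (c:ℝ) * (1/(4*(c:ℝ))) :=
      mul_lt_mul_of_pos_left hint hc0
    have heq : (c:ℝ) * (1/(4*(c:ℝ))) = 1/4 := by field_simp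
    rw [heq] at this
    linarith
  · intro x hx y hy hmax hdist
    obtain ⟨hgx, hgy⟩ := max_lt_iff.1 hmax
    have hinvc : 1/(c:ℝ) < ε/4 := by
      rw [div_lt_div_iff₀ hc0 (by norm_num : (0:ℝ) < 4)]
      rw [div_lt_iff₀ hε] at hcineq
      linarith
    have hxsmall : fhi x - flo x < 1/(c:ℝ) := by
      rw [lt_div_iff₀ hc0]
      calc (fhi x - flo x) * (c:ℝ) = (c:ℝ) * (fhi x - flo x) := by ring
        _ < 1 := hgx
    have hysmall : fhi y - flo y < 1/(c:ℝ) := by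
      rw [lt_div_iff₀ hc0]
      calc (fhi y - flo y) * (c:ℝ) = (c:ℝ) * (fhi y - flo y) := by ring
        _ < 1 := hgy
    have hbx := hbound x hx
    have hby := hbound y hy
    have hd1 : |flo x - flo y| < ε/4 :=
      hu1 x hx y hy (lt_of_lt_of_le hdist (min_le_left _ _))
    have hd2 : |fhi x - fhi y| < ε/4 :=
      hu2 x hx y hy (lt_of_lt_of_le hdist (min_le_right _ _))
    rw [abs_lt] at hd1 hd2 ⊢
    constructor <;> nlinarith [hd1.1, hd1.2, hd2.1, hd2.2, hbx.1, hbx.2, hby.1, hby.2]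
end
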